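/- Let Γ be as in the model with sup bound |Γ(u)| ≤ C̄ for u in the relevant class, let χ(u) = (u'+y')/sqrt(1+(u'+y')^2) with |χ| < 1, and define h_α(w,θ) = -(Hξ + (A E_c / L_c)Γ(w + ℓ sin θ)) χ(w + ℓ sin θ) where 1 ≤ ξ(x) < ξ̄. Then pointwise, |h_α(w_1,θ_1) - h_α(w_2,θ_2)| ≤ (H ξ̄ + (A E_c / L_c) C̄)(|w_x| + ℓ|θ_x| + ℓ|θ_{2,x} θ|) + (A E_c / L_c) ∫_0^L (|w_x| + ℓ|θ_x| + ℓ|θ_{2,x} θ|) dx, where w = w_1 - w_2 and θ = θ_1 - θ_2, assuming both s ↦ s/sqrt(1+s^2) and s ↦ sqrt(1+s^2) are 1-Lipschitz and |(w_1+ℓ sin θ_1)' - (w_2+ℓ sin θ_2)'| ≤ |w_x| + ℓ|θ_x| + ℓ|θ_{2,x} θ|. -/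
import Mathlib


open Set intervalIntegral

/-- Pointwise Lipschitz-type estimate for the nonlinear cable restoring force
`h_α(w,θ) = -(Hξ + (AE_c/L_c)Γ(w+ℓ sin θ)) χ(w+ℓ sin θ)`. -/
theorem stmt_11 (L ℓ H A Ec Lc ξbar Cbar : ℝ)
    (hL : 0 < L) (hℓ : 0 < ℓ) (hH : 0 < H) (hA : 0 < A) (hEc : 0 < Ec)
    (hLc : 0 < Lc) (hξbar : 0 < ξbar) (hCbar : 0 < Cbar)
    (y ξ : ℝ → ℝ) (hy : ContDiff ℝ 1 y)
    (hξ : ∀ x ∈ Ioo (0:ℝ) L, 1 ≤ ξ x ∧ ξ x < ξbar)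
    (Γ : (ℝ → ℝ) → ℝ)
    (hΓ : ∀ u : ℝ → ℝ, Γ u = ∫ x in (0:ℝ)..L,
        (Real.sqrt (1 + (deriv u x + deriv y x)^2)
          - Real.sqrt (1 + (deriv y x)^2)))
    (χ : (ℝ → ℝ) → ℝ → ℝ)
    (hχ : ∀ (u : ℝ → ℝ) (x : ℝ), χ u x = (deriv u x + deriv y x) /
        Real.sqrt (1 + (deriv u x + deriv y x)^2))
    (hα : (ℝ → ℝ) → (ℝ → ℝ) → ℝ → ℝ)
    (hhα : ∀ (w θ : ℝ → ℝ) (x : ℝ),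
        hα w θ x = -(H * ξ x + (A * Ec / Lc) * Γ (fun t => w t + ℓ * Real.sin (θ t)))
          * χ (fun t => w t + ℓ * Real.sin (θ t)) x)
    (w1 w2 θ1 θ2 : ℝ → ℝ)
    (hw1 : ContDiff ℝ 1 w1) (hw2 : ContDiff ℝ 1 w2)
    (hθ1 : ContDiff ℝ 1 θ1) (hθ2 : ContDiff ℝ 1 θ2)
    (hΓbd1 : |Γ (fun t => w1 t + ℓ * Real.sin (θ1 t))| ≤ Cbar)
    (hΓbd2 : |Γ (fun t => w2 t + ℓ * Real.sin (θ2 t))| ≤ Cbar)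
    (hχlip : LipschitzWith 1 (fun s : ℝ => s / Real.sqrt (1 + s^2)))
    (hγlip : LipschitzWith 1 (fun s : ℝ => Real.sqrt (1 + s^2)))
    (D : ℝ → ℝ)
    (hD : ∀ x : ℝ, D x = |deriv w1 x - deriv w2 x| + ℓ * |deriv θ1 x - deriv θ2 x|
        + ℓ * |deriv θ2 x| * |θ1 x - θ2 x|)
    (hder : ∀ x ∈ Ioo (0:ℝ) L,
        |deriv (fun t => w1 t + ℓ * Real.sin (θ1 t)) x
          - deriv (fun t => w2 t + ℓ * Real.sin (θ2 t)) x| ≤ D x) :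
    ∀ x ∈ Ioo (0:ℝ) L,
      |hα w1 θ1 x - hα w2 θ2 x|
        ≤ (H * ξbar + (A * Ec / Lc) * Cbar) * D x
          + (A * Ec / Lc) * ∫ t in (0:ℝ)..L, D t := by
  intro x hx
  have hcpos : 0 < A * Ec / Lc := by positivity
  set c : ℝ := A * Ec / Lc with hc
  set u1 : ℝ → ℝ := fun t => w1 t + ℓ * Real.sin (θ1 t) with hu1def
  set u2 : ℝ → ℝ := fun t => w2 t + ℓ * Real.sin (θ2 t) with hu2def
  have hu1 : ContDiff ℝ 1 u1 :=
    hw1.add (contDiff_const.mul ((Real.contDiff_sin.of_le le_top).comp hθ1))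
  have hu2 : ContDiff ℝ 1 u2 :=
    hw2.add (contDiff_const.mul ((Real.contDiff_sin.of_le le_top).comp hθ2))
  have hdu1 : Continuous (deriv u1) := hu1.continuous_deriv le_rfl
  have hdu2 : Continuous (deriv u2) := hu2.continuous_deriv le_rfl
  have hdy : Continuous (deriv y) := hy.continuous_deriv le_rfl
  have hDcont : Continuous D := by
    have h1 := hw1.continuous_deriv le_rfl
    have h2 := hw2.continuous_deriv le_rfl
    have h3 := hθ1.continuous_deriv le_rfl
    have h4 := hθ2.continuous_deriv le_rfl
    have : Continuous fun x => |deriv w1 x - deriv w2 x| + ℓ * |deriv θ1 x - deriv θ2 x|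
        + ℓ * |deriv θ2 x| * |θ1 x - θ2 x| := by
      apply Continuous.add
      apply Continuous.add
      · exact (h1.sub h2).abs
      · exact continuous_const.mul (h3.sub h4).abs
      · exact (continuous_const.mul h4.abs).mul (hθ1.continuous.sub hθ2.continuous).abs
    convert this using 1
    funext t; exact hD t
  have hDnonneg : ∀ t, 0 ≤ D t := by
    intro t; rw [hD t]; positivity
  -- Fact B : |χ u2 x| ≤ 1
  have hχbd : |χ u2 x| ≤ 1 := by
    rw [hχ]
    set s := deriv u2 x + deriv y x
    have hs : (0:ℝ) < Real.sqrt (1 + s ^ 2) := Real.sqrt_pos.2 (by positivity)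
    rw [abs_div, abs_of_pos hs, div_le_one hs]
    calc |s| = Real.sqrt (s ^ 2) := by rw [Real.sqrt_sq_eq_abs]
    _ ≤ Real.sqrt (1 + s ^ 2) := Real.sqrt_le_sqrt (by nlinarith)
  -- Fact A : |χ u1 x - χ u2 x| ≤ D x
  have hχdiff : |χ u1 x - χ u2 x| ≤ D x := by
    rw [hχ, hχ]
    have := hχlip.dist_le_mul (deriv u1 x + deriv y x) (deriv u2 x + deriv y x)
    simp only [Real.dist_eq, NNReal.coe_one, one_mul] at this
    calc |(deriv u1 x + deriv y x) / Real.sqrt (1 + (deriv u1 x + deriv y x) ^ 2)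
          - (deriv u2 x + deriv y x) / Real.sqrt (1 + (deriv u2 x + deriv y x) ^ 2)|
        ≤ |(deriv u1 x + deriv y x) - (deriv u2 x + deriv y x)| := this
      _ = |deriv u1 x - deriv u2 x| := by ring_nf
      _ ≤ D x := hder x hx
  -- Fact C : |Γ u1 - Γ u2| ≤ ∫ D
  have hg1 : Continuous fun t => Real.sqrt (1 + (deriv u1 t + deriv y t) ^ 2) :=
    ((continuous_const.add ((hdu1.add hdy).pow 2))).sqrt
  have hg2 : Continuous fun t => Real.sqrt (1 + (deriv u2 t + deriv y t) ^ 2) :=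
    ((continuous_const.add ((hdu2.add hdy).pow 2))).sqrt
  have hgy : Continuous fun t => Real.sqrt (1 + (deriv y t) ^ 2) :=
    ((continuous_const.add (hdy.pow 2))).sqrt
  have hint1 : IntervalIntegrable
      (fun t => Real.sqrt (1 + (deriv u1 t + deriv y t) ^ 2)
        - Real.sqrt (1 + (deriv y t) ^ 2)) MeasureTheory.volume 0 L :=
    (hg1.sub hgy).intervalIntegrable 0 L
  have hint2 : IntervalIntegrable
      (fun t => Real.sqrt (1 + (deriv u2 t + deriv y t) ^ 2)
        - Real.sqrt (1 + (deriv y t) ^ 2)) MeasureTheory.volume 0 L :=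
    (hg2.sub hgy).intervalIntegrable 0 L
  have hintg : IntervalIntegrable
      (fun t => |Real.sqrt (1 + (deriv u1 t + deriv y t) ^ 2)
        - Real.sqrt (1 + (deriv u2 t + deriv y t) ^ 2)|) MeasureTheory.volume 0 L :=
    (hg1.sub hg2).abs.intervalIntegrable 0 L
  have hintD : IntervalIntegrable D MeasureTheory.volume 0 L :=
    hDcont.intervalIntegrable 0 L
  have hptwise : ∀ t ∈ Ioo (0:ℝ) L,
      |Real.sqrt (1 + (deriv u1 t + deriv y t) ^ 2)
        - Real.sqrt (1 + (deriv u2 t + deriv y t) ^ 2)| ≤ D t := by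
    intro t ht
    have := hγlip.dist_le_mul (deriv u1 t + deriv y t) (deriv u2 t + deriv y t)
    simp only [Real.dist_eq, NNReal.coe_one, one_mul] at this
    calc |Real.sqrt (1 + (deriv u1 t + deriv y t) ^ 2)
          - Real.sqrt (1 + (deriv u2 t + deriv y t) ^ 2)|
        ≤ |(deriv u1 t + deriv y t) - (deriv u2 t + deriv y t)| := this
      _ = |deriv u1 t - deriv u2 t| := by ring_nf
      _ ≤ D t := hder t ht
  have hΓdiff : |Γ u1 - Γ u2| ≤ ∫ t in (0:ℝ)..L, D t := by
    rw [hΓ, hΓ, ← intervalIntegral.integral_sub hint1 hint2]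
    have heq : (fun t => (Real.sqrt (1 + (deriv u1 t + deriv y t) ^ 2)
          - Real.sqrt (1 + (deriv y t) ^ 2))
        - (Real.sqrt (1 + (deriv u2 t + deriv y t) ^ 2)
          - Real.sqrt (1 + (deriv y t) ^ 2)))
        = fun t => Real.sqrt (1 + (deriv u1 t + deriv y t) ^ 2)
          - Real.sqrt (1 + (deriv u2 t + deriv y t) ^ 2) := by
      funext t; ring
    rw [heq]
    calc |∫ t in (0:ℝ)..L, (Real.sqrt (1 + (deriv u1 t + deriv y t) ^ 2)
          - Real.sqrt (1 + (deriv u2 t + deriv y t) ^ 2))|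
        ≤ ∫ t in (0:ℝ)..L, |Real.sqrt (1 + (deriv u1 t + deriv y t) ^ 2)
          - Real.sqrt (1 + (deriv u2 t + deriv y t) ^ 2)| :=
        intervalIntegral.abs_integral_le_integral_abs hL.le
      _ ≤ ∫ t in (0:ℝ)..L, D t := by
        apply intervalIntegral.integral_mono_ae_restrict hL.le hintg hintD
        have hsub : Ioo (0:ℝ) L =ᵐ[MeasureTheory.volume] Icc (0:ℝ) L :=
          MeasureTheory.Ioo_ae_eq_Icc
        rw [← MeasureTheory.Measure.restrict_congr_set hsub]
        exact (MeasureTheory.ae_restrict_iff' measurableSet_Ioo).2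
          (MeasureTheory.ae_of_all _ hptwise)
  have hintDnonneg : 0 ≤ ∫ t in (0:ℝ)..L, D t :=
    intervalIntegral.integral_nonneg hL.le (fun t _ => hDnonneg t)
  -- coefficient bound
  have hP1 : |H * ξ x + c * Γ u1| ≤ H * ξbar + c * Cbar := by
    obtain ⟨hξ1, hξ2⟩ := hξ x hx
    calc |H * ξ x + c * Γ u1| ≤ |H * ξ x| + |c * Γ u1| := abs_add_le _ _
      _ = H * ξ x + c * |Γ u1| := by
          rw [abs_mul, abs_mul, abs_of_pos hH, abs_of_pos hcpos,
            abs_of_pos (lt_of_lt_of_le one_pos hξ1)]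
      _ ≤ H * ξbar + c * Cbar := by
          have : |Γ u1| ≤ Cbar := hΓbd1
          nlinarith
  -- assemble
  rw [hhα, hhα]
  have hid : -(H * ξ x + c * Γ u1) * χ u1 x - -(H * ξ x + c * Γ u2) * χ u2 x
      = -(H * ξ x + c * Γ u1) * (χ u1 x - χ u2 x) - c * (Γ u1 - Γ u2) * χ u2 x := by
    ring
  rw [hid]
  calc |-(H * ξ x + c * Γ u1) * (χ u1 x - χ u2 x) - c * (Γ u1 - Γ u2) * χ u2 x|
      ≤ |-(H * ξ x + c * Γ u1) * (χ u1 x - χ u2 x)| + |c * (Γ u1 - Γ u2) * χ u2 x| :=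
        abs_sub _ _
    _ = |H * ξ x + c * Γ u1| * |χ u1 x - χ u2 x| + c * |Γ u1 - Γ u2| * |χ u2 x| := by
        rw [abs_mul, abs_neg, abs_mul, abs_mul, abs_of_pos hcpos]
    _ ≤ (H * ξbar + c * Cbar) * D x + c * (∫ t in (0:ℝ)..L, D t) * 1 := by
        have t1 : |H * ξ x + c * Γ u1| * |χ u1 x - χ u2 x| ≤ (H * ξbar + c * Cbar) * D x :=
          mul_le_mul hP1 hχdiff (abs_nonneg _) ((abs_nonneg _).trans hP1)
        have t2 : c * |Γ u1 - Γ u2| * |χ u2 x| ≤ c * (∫ t in (0:ℝ)..L, D t) * 1 :=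
          mul_le_mul (mul_le_mul le_rfl hΓdiff (abs_nonneg _) hcpos.le) hχbd
            (abs_nonneg _) (by positivity)
        exact add_le_add t1 t2
    _ = (H * ξbar + c * Cbar) * D x + c * ∫ t in (0:ℝ)..L, D t := by ring
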